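/- Let K = diag(λ_1, …, λ_m) with pairwise distinct λ_i, and A = [[0, I_m], [-K, 0]]. Let ℰ(ij) = [[0,0],[E(ij),0]]. Then the span of the matrices ℰ(ij), [ℰ(ij), A], [[ℰ(ij), A], A], and [[[ℰ(ij), A], A], A] over all 1 ≤ i ≤ j ≤ m equals the full Lie algebra sp(m) = {Y ∈ M_{2m}(ℝ) : JY symmetric}, which has dimension m(2m+1). -/

import Mathlib

open Matrix

/-- The standard symplectic form matrix `J = [[0, I_m], [-I_m, 0]]`. -/
def Jmat (m : ℕ) : Matrix (Fin m ⊕ Fin m) (Fin m ⊕ Fin m) ℝ :=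
  Matrix.fromBlocks 0 1 (-1) 0

/-- The symmetric matrices `E(ij)` with entries `δ_{ik}δ_{jl} + δ_{il}δ_{jk}`. -/
def Eij (m : ℕ) (i j : Fin m) : Matrix (Fin m) (Fin m) ℝ :=
  Matrix.of fun k l =>
    ((if i = k then 1 else 0) * (if j = l then 1 else 0) +
      (if i = l then 1 else 0) * (if j = k then 1 else 0) : ℝ)

namespace Stmt15

abbrev Mm (m : ℕ) := Matrix (Fin m) (Fin m) ℝ
abbrev M2 (m : ℕ) := Matrix (Fin m ⊕ Fin m) (Fin m ⊕ Fin m) ℝ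

variable {m : ℕ}

theorem fromBlocks_sub {n o l p : Type*} (A : Matrix n l ℝ) (B : Matrix n p ℝ)
    (C : Matrix o l ℝ) (D : Matrix o p ℝ) (A' : Matrix n l ℝ) (B' : Matrix n p ℝ)
    (C' : Matrix o l ℝ) (D' : Matrix o p ℝ) :
    fromBlocks A B C D - fromBlocks A' B' C' D' =
      fromBlocks (A - A') (B - B') (C - C') (D - D') := by
  simp [sub_eq_add_neg, ← Matrix.fromBlocks_neg, ← Matrix.fromBlocks_add]

noncomputable def dL (m : ℕ) : Mm m →ₗ[ℝ] M2 m where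
  toFun a := fromBlocks a 0 0 (-aᵀ)
  map_add' a b := by simp [Matrix.fromBlocks_add, Matrix.transpose_add, neg_add, add_comm]
  map_smul' r a := by simp [Matrix.fromBlocks_smul, Matrix.transpose_smul]

noncomputable def bL (m : ℕ) : Mm m →ₗ[ℝ] M2 m where
  toFun a := fromBlocks 0 a 0 0
  map_add' a b := by simp [Matrix.fromBlocks_add]
  map_smul' r a := by simp [Matrix.fromBlocks_smul]

noncomputable def cL (m : ℕ) : Mm m →ₗ[ℝ] M2 m where
  toFun a := fromBlocks 0 0 a 0
  map_add' a b := by simp [Matrix.fromBlocks_add]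
  map_smul' r a := by simp [Matrix.fromBlocks_smul]

noncomputable def symMap (m : ℕ) : M2 m →ₗ[ℝ] M2 m where
  toFun Y := (Jmat m * Y)ᵀ - Jmat m * Y
  map_add' Y Z := by simp [mul_add, Matrix.transpose_add]; abel
  map_smul' r Y := by simp [Matrix.mul_smul, Matrix.transpose_smul, smul_sub]

theorem mem_ker_symMap_iff (Y : M2 m) :
    Y ∈ LinearMap.ker (symMap m) ↔ (Jmat m * Y)ᵀ = Jmat m * Y := by
  simp [symMap, LinearMap.mem_ker, sub_eq_zero]

theorem Eij_symm (i j : Fin m) : Eij m i j = Eij m j i := by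
  ext k l; simp only [Eij, Matrix.of_apply]; ring

theorem Eij_transpose (i j : Fin m) : (Eij m i j)ᵀ = Eij m i j := by
  ext k l; simp only [Eij, Matrix.transpose_apply, Matrix.of_apply]; ring

theorem dL_mem_ker (a : Mm m) : dL m a ∈ LinearMap.ker (symMap m) := by
  rw [mem_ker_symMap_iff]
  rw [show dL m a = fromBlocks a 0 0 (-aᵀ) from rfl]
  simp [dL, Jmat, Matrix.fromBlocks_multiply, Matrix.fromBlocks_transpose]

theorem bL_mem_ker (b : Mm m) (hb : bᵀ = b) : bL m b ∈ LinearMap.ker (symMap m) := by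
  rw [mem_ker_symMap_iff]
  simp [bL, Jmat, Matrix.fromBlocks_multiply, Matrix.fromBlocks_transpose, hb]

theorem cL_mem_ker (c : Mm m) (hc : cᵀ = c) : cL m c ∈ LinearMap.ker (symMap m) := by
  rw [mem_ker_symMap_iff]
  simp [cL, Jmat, Matrix.fromBlocks_multiply, Matrix.fromBlocks_transpose, hc]


-- key scalar identity
theorem lemId (lam : Fin m → ℝ) (i j : Fin m) :
    (3 * lam i + lam j) • Eij m i j -
      ((3:ℝ) • (Eij m i j * Matrix.diagonal lam) + Matrix.diagonal lam * Eij m i j)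
    = (2 * (lam i - lam j)) • Matrix.single i j (1:ℝ) := by
  ext k l
  simp only [Eij, Matrix.sub_apply, Matrix.smul_apply, Matrix.add_apply, Matrix.of_apply,
    Matrix.mul_diagonal, Matrix.diagonal_mul, Matrix.single, smul_eq_mul]
  split_ifs with h1 h2 h3 h4 h5 h6 h7 h8 <;>
    first
    | (obtain ⟨rfl, rfl⟩ := h1) <;> simp_all <;> ring
    | simp_all <;> ring

theorem Eij_diag (i : Fin m) :
    Eij m i i = (2:ℝ) • Matrix.single i i (1:ℝ) := by
  ext k l
  rcases eq_or_ne i k with rfl | h1 <;> rcases eq_or_ne i l with rfl | h2 <;>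
    simp [Eij, Matrix.single, *] <;> first | norm_num | simp [eq_comm, *]

-- sum decomposition for symmetric matrices
theorem symm_eq_sum (S : Matrix (Fin m) (Fin m) ℝ) (hS : Sᵀ = S) :
    S = ∑ p : Fin m × Fin m, (S p.1 p.2 / 2) • Eij m p.1 p.2 := by
  ext k l
  rw [Matrix.sum_apply]
  have hlk : S l k = S k l := congrFun (congrFun hS k) l
  simp only [Matrix.smul_apply, Eij, Matrix.of_apply, smul_eq_mul]
  rw [Fintype.sum_prod_type]
  simp [mul_add, ite_mul, mul_ite, Finset.sum_add_distrib, Finset.sum_ite_eq, Finset.sum_ite_eq',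
    hlk]
  try ring


-- block computations of the brackets
theorem comp1 (E K : Mm m) :
    fromBlocks 0 0 E 0 * fromBlocks 0 1 (-K) 0 - fromBlocks 0 1 (-K) 0 * fromBlocks 0 0 E 0
      = fromBlocks (-E) 0 0 E := by
  simp [Matrix.fromBlocks_multiply, fromBlocks_sub]

theorem comp2 (E K : Mm m) :
    fromBlocks (-E) 0 0 E * fromBlocks 0 1 (-K) 0 - fromBlocks 0 1 (-K) 0 * fromBlocks (-E) 0 0 E
      = fromBlocks 0 ((-2:ℝ) • E) (-(E * K + K * E)) 0 := by
  simp only [Matrix.fromBlocks_multiply, fromBlocks_sub, Matrix.fromBlocks_inj]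
  refine ⟨?_, ?_, ?_, ?_⟩ <;>
    · simp only [Matrix.mul_zero, Matrix.zero_mul, Matrix.mul_one, Matrix.one_mul,
        Matrix.mul_neg, Matrix.neg_mul, Matrix.smul_mul, Matrix.mul_smul, neg_neg, add_zero, zero_add,
        sub_zero, zero_sub, sub_self, neg_zero]
      try module

theorem comp3 (E K : Mm m) :
    fromBlocks 0 ((-2:ℝ) • E) (-(E * K + K * E)) 0 * fromBlocks 0 1 (-K) 0
      - fromBlocks 0 1 (-K) 0 * fromBlocks 0 ((-2:ℝ) • E) (-(E * K + K * E)) 0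
      = fromBlocks ((3:ℝ) • (E * K) + K * E) 0 0 (-((3:ℝ) • (K * E) + E * K)) := by
  simp only [Matrix.fromBlocks_multiply, fromBlocks_sub, Matrix.fromBlocks_inj]
  refine ⟨?_, ?_, ?_, ?_⟩ <;>
    · simp only [Matrix.mul_zero, Matrix.zero_mul, Matrix.mul_one, Matrix.one_mul,
        Matrix.mul_neg, Matrix.neg_mul, Matrix.smul_mul, Matrix.mul_smul, neg_neg, add_zero, zero_add,
        sub_zero, zero_sub, sub_self, neg_zero]
      try module

@[simp] theorem dL_apply (a : Mm m) : dL m a = fromBlocks a 0 0 (-aᵀ) := rfl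
@[simp] theorem bL_apply (a : Mm m) : bL m a = fromBlocks 0 a 0 0 := rfl
@[simp] theorem cL_apply (a : Mm m) : cL m a = fromBlocks 0 0 a 0 := rfl

/-- block decomposition of elements of the kernel -/
theorem mem_ker_decomp (Y : M2 m) (hY : Y ∈ LinearMap.ker (symMap m)) :
    Y = dL m (Y.toBlocks₁₁) + bL m (Y.toBlocks₁₂) + cL m (Y.toBlocks₂₁) ∧
      (Y.toBlocks₁₂)ᵀ = Y.toBlocks₁₂ ∧ (Y.toBlocks₂₁)ᵀ = Y.toBlocks₂₁ := by
  rw [mem_ker_symMap_iff] at hY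
  set a := Y.toBlocks₁₁; set b := Y.toBlocks₁₂; set c := Y.toBlocks₂₁; set d := Y.toBlocks₂₂
  have hYb : Y = fromBlocks a b c d := (fromBlocks_toBlocks Y).symm
  rw [hYb] at hY
  rw [show Jmat m * fromBlocks a b c d = fromBlocks c d (-a) (-b) by
      simp [Jmat, Matrix.fromBlocks_multiply]] at hY
  rw [Matrix.fromBlocks_transpose, Matrix.fromBlocks_inj] at hY
  obtain ⟨hc, hd, -, hb⟩ := hY
  refine ⟨?_, by simpa using hb, hc⟩
  rw [hYb]
  simp only [dL_apply, bL_apply, cL_apply, Matrix.fromBlocks_add]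
  rw [← hd]
  simp

abbrev SIdx (m : ℕ) := {p : Fin m × Fin m // p.1 ≤ p.2}

noncomputable def vFam (m : ℕ) : (Fin m × Fin m) ⊕ (SIdx m ⊕ SIdx m) → M2 m
  | Sum.inl p => dL m (Matrix.single p.1 p.2 (1:ℝ))
  | Sum.inr (Sum.inl s) => bL m (Eij m s.1.1 s.1.2)
  | Sum.inr (Sum.inr s) => cL m (Eij m s.1.1 s.1.2)

theorem vFam_mem_ker (k) : vFam m k ∈ LinearMap.ker (symMap m) := by
  rcases k with p | s | s
  · exact dL_mem_ker _
  · exact bL_mem_ker _ (Eij_transpose _ _)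
  · exact cL_mem_ker _ (Eij_transpose _ _)

theorem bL_Eij_mem_span (i j : Fin m) :
    bL m (Eij m i j) ∈ Submodule.span ℝ (Set.range (vFam m)) := by
  rcases le_total i j with h | h
  · exact Submodule.subset_span ⟨Sum.inr (Sum.inl ⟨(i, j), h⟩), rfl⟩
  · rw [Eij_symm]
    exact Submodule.subset_span ⟨Sum.inr (Sum.inl ⟨(j, i), h⟩), rfl⟩

theorem cL_Eij_mem_span (i j : Fin m) :
    cL m (Eij m i j) ∈ Submodule.span ℝ (Set.range (vFam m)) := by
  rcases le_total i j with h | h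
  · exact Submodule.subset_span ⟨Sum.inr (Sum.inr ⟨(i, j), h⟩), rfl⟩
  · rw [Eij_symm]
    exact Submodule.subset_span ⟨Sum.inr (Sum.inr ⟨(j, i), h⟩), rfl⟩

/-- symmetric matrices mapped by a linear map land in the span, given the
images of the `Eij` are in a submodule. -/
theorem symm_map_mem {N : Type*} [AddCommMonoid N] [Module ℝ N] (L : Mm m →ₗ[ℝ] N)
    (W : Submodule ℝ N) (hEij : ∀ i j : Fin m, L (Eij m i j) ∈ W)
    (b : Mm m) (hb : bᵀ = b) : L b ∈ W := by
  rw [symm_eq_sum b hb, map_sum]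
  exact Submodule.sum_mem _ fun p _ => by
    rw [LinearMap.map_smul]; exact Submodule.smul_mem _ _ (hEij p.1 p.2)

theorem dL_mem_span_vFam (a : Mm m) :
    dL m a ∈ Submodule.span ℝ (Set.range (vFam m)) := by
  rw [matrix_eq_sum_single a, map_sum]
  refine Submodule.sum_mem _ fun i _ => ?_
  rw [map_sum]
  refine Submodule.sum_mem _ fun j _ => ?_
  have : Matrix.single i j (a i j) = a i j • Matrix.single i j (1:ℝ) := by
    rw [Matrix.smul_single, smul_eq_mul, mul_one]
  rw [this, LinearMap.map_smul]
  exact Submodule.smul_mem _ _ (Submodule.subset_span ⟨Sum.inl (i, j), rfl⟩)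

theorem ker_le_span_vFam :
    LinearMap.ker (symMap m) ≤ Submodule.span ℝ (Set.range (vFam m)) := by
  intro Y hY
  obtain ⟨hdec, hb, hc⟩ := mem_ker_decomp Y hY
  rw [hdec]
  exact add_mem (add_mem (dL_mem_span_vFam _)
      (symm_map_mem (bL m) _ bL_Eij_mem_span _ hb))
    (symm_map_mem (cL m) _ cL_Eij_mem_span _ hc)

theorem span_vFam_eq_ker :
    Submodule.span ℝ (Set.range (vFam m)) = LinearMap.ker (symMap m) := by
  refine le_antisymm (Submodule.span_le.2 ?_) ker_le_span_vFam
  rintro X ⟨k, rfl⟩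
  exact vFam_mem_ker k

theorem helperF (w : Fin m × Fin m → ℝ)
    (h : ∑ p : Fin m × Fin m, w p • Matrix.single p.1 p.2 (1:ℝ) = 0)
    (q : Fin m × Fin m) : w q = 0 := by
  have h2 := congrFun (congrFun h q.1) q.2
  simp only [Matrix.sum_apply, Matrix.smul_apply, Matrix.single, Matrix.of_apply,
    smul_eq_mul, Matrix.zero_apply, mul_ite, mul_one, mul_zero] at h2
  rw [Finset.sum_eq_single_of_mem q (Finset.mem_univ q)] at h2
  · simpa using h2
  · intro t _ htq
    rw [if_neg]
    rintro ⟨h1, h2⟩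
    exact htq (Prod.ext h1 h2)

theorem helperE (w : SIdx m → ℝ)
    (h : ∑ s : SIdx m, w s • Eij m s.1.1 s.1.2 = 0) (q : SIdx m) : w q = 0 := by
  have h2 := congrFun (congrFun h q.1.1) q.1.2
  simp only [Matrix.sum_apply, Matrix.smul_apply, smul_eq_mul, Matrix.zero_apply] at h2
  rw [Finset.sum_eq_single_of_mem q (Finset.mem_univ q)] at h2
  · rcases eq_or_ne q.1.1 q.1.2 with he | he
    · rw [show Eij m q.1.1 q.1.2 q.1.1 q.1.2 = 2 by norm_num [Eij, he]] at h2; linarith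
    · rw [show Eij m q.1.1 q.1.2 q.1.1 q.1.2 = 1 by norm_num [Eij, he, he.symm]] at h2; linarith
  · rintro ⟨⟨t1, t2⟩, ht⟩ - htq
    obtain ⟨⟨q1, q2⟩, hq⟩ := q
    have hne : ¬(t1 = q1 ∧ t2 = q2) := by
      rintro ⟨rfl, rfl⟩; exact htq rfl
    have h5 : ¬(t1 = q2 ∧ t2 = q1) := by
      rintro ⟨rfl, rfl⟩
      exact hne ⟨le_antisymm ht hq, le_antisymm hq ht⟩
    have hz : Eij m t1 t2 q1 q2 = 0 := by
      simp only [Eij, Matrix.of_apply]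
      rcases Decidable.not_and_iff_or_not.1 hne with h | h <;>
        rcases Decidable.not_and_iff_or_not.1 h5 with h' | h' <;>
        simp [h, h']
    simp only [hz, mul_zero]

theorem vFam_indep : LinearIndependent ℝ (vFam m) := by
  rw [Fintype.linearIndependent_iff]
  intro g hg
  rw [Fintype.sum_sum_type, Fintype.sum_sum_type] at hg
  have hrw :
      (∑ p : Fin m × Fin m, g (Sum.inl p) • vFam m (Sum.inl p)) +
        ((∑ s : SIdx m, g (Sum.inr (Sum.inl s)) • vFam m (Sum.inr (Sum.inl s))) +
          ∑ s : SIdx m, g (Sum.inr (Sum.inr s)) • vFam m (Sum.inr (Sum.inr s))) =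
      dL m (∑ p : Fin m × Fin m, g (Sum.inl p) • Matrix.single p.1 p.2 (1:ℝ)) +
        bL m (∑ s : SIdx m, g (Sum.inr (Sum.inl s)) • Eij m s.1.1 s.1.2) +
        cL m (∑ s : SIdx m, g (Sum.inr (Sum.inr s)) • Eij m s.1.1 s.1.2) := by
    simp only [vFam, map_sum, LinearMap.map_smul]
    abel
  rw [hrw] at hg
  set α := ∑ p : Fin m × Fin m, g (Sum.inl p) • Matrix.single p.1 p.2 (1:ℝ) with hα
  set β := ∑ s : SIdx m, g (Sum.inr (Sum.inl s)) • Eij m s.1.1 s.1.2 with hβ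
  set γ := ∑ s : SIdx m, g (Sum.inr (Sum.inr s)) • Eij m s.1.1 s.1.2 with hγ
  have hblocks : fromBlocks α β γ (-αᵀ) = 0 := by
    rw [← hg]
    simp [Matrix.fromBlocks_add]
  rw [← Matrix.fromBlocks_zero, Matrix.fromBlocks_inj] at hblocks
  obtain ⟨h1, h2, h3, -⟩ := hblocks
  rintro (p | s | s)
  · exact helperF _ h1 p
  · exact helperE _ h2 s
  · exact helperE _ h3 s

theorem finrank_ker :
    Module.finrank ℝ (LinearMap.ker (symMap m)) = m * (2 * m + 1) := by
  rw [← span_vFam_eq_ker, finrank_span_eq_card vFam_indep]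
  have hS : Fintype.card (SIdx m) = (m + 1).choose 2 := by
    rw [← Fintype.card_congr (Sym2.sortEquiv (α := Fin m)), Sym2.card, Fintype.card_fin]
  have hd : 2 ∣ (m + 1) * m := by
    rw [Nat.mul_comm]; exact (Nat.even_mul_succ_self m).two_dvd
  have hc := Nat.choose_two_right (m + 1)
  simp only [Fintype.card_sum, Fintype.card_prod, Fintype.card_fin, hS]
  simp only [Nat.add_sub_cancel] at hc
  have : m * m + ((m + 1) * m / 2 + (m + 1) * m / 2) = m * (2 * m + 1) := by
    have h2 : (m + 1) * m / 2 + (m + 1) * m / 2 = (m + 1) * m := by omega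
    rw [h2]; ring
  omega

end Stmt15

open Stmt15

/-- For `K = diag(λ)` with pairwise distinct eigenvalues and
`A = [[0, I],[-K, 0]]`, the matrices `ℰ(ij)`, `[ℰ(ij),A]`, `[[ℰ(ij),A],A]`,
`[[[ℰ(ij),A],A],A]`, over all `i ≤ j`, span the full Lie algebra
sp(m) = {Y : J Y symmetric}, of dimension `m(2m+1)`. -/
theorem stmt_15 (m : ℕ) (hm : 1 ≤ m) (lam : Fin m → ℝ)
    (hlam : ∀ i j : Fin m, i ≠ j → lam i ≠ lam j) :
    let K : Matrix (Fin m) (Fin m) ℝ := Matrix.diagonal lam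
    let A : Matrix (Fin m ⊕ Fin m) (Fin m ⊕ Fin m) ℝ := Matrix.fromBlocks 0 1 (-K) 0
    let ℰ : Fin m → Fin m → Matrix (Fin m ⊕ Fin m) (Fin m ⊕ Fin m) ℝ :=
      fun i j => Matrix.fromBlocks 0 0 (Eij m i j) 0
    let B1 : Fin m → Fin m → Matrix (Fin m ⊕ Fin m) (Fin m ⊕ Fin m) ℝ :=
      fun i j => ℰ i j * A - A * ℰ i j
    let B2 : Fin m → Fin m → Matrix (Fin m ⊕ Fin m) (Fin m ⊕ Fin m) ℝ :=
      fun i j => B1 i j * A - A * B1 i j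
    let B3 : Fin m → Fin m → Matrix (Fin m ⊕ Fin m) (Fin m ⊕ Fin m) ℝ :=
      fun i j => B2 i j * A - A * B2 i j
    ∃ W : Submodule ℝ (Matrix (Fin m ⊕ Fin m) (Fin m ⊕ Fin m) ℝ),
      (W : Set (Matrix (Fin m ⊕ Fin m) (Fin m ⊕ Fin m) ℝ)) =
        {Y | (Jmat m * Y)ᵀ = Jmat m * Y} ∧
      Submodule.span ℝ
        {X | ∃ i j : Fin m, i ≤ j ∧
          (X = ℰ i j ∨ X = B1 i j ∨ X = B2 i j ∨ X = B3 i j)} = W ∧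
      Module.finrank ℝ W = m * (2 * m + 1) := by
  intro K A ℰ B1 B2 B3
  have hA : A = fromBlocks 0 1 (-(Matrix.diagonal lam)) 0 := rfl
  have hE' : ∀ i j, ℰ i j = fromBlocks 0 0 (Eij m i j) 0 := fun _ _ => rfl
  have hB1' : ∀ i j, B1 i j = fromBlocks (-(Eij m i j)) 0 0 (Eij m i j) := by
    intro i j
    show ℰ i j * A - A * ℰ i j = _
    rw [hE', hA, comp1]
  have hB2' : ∀ i j, B2 i j = fromBlocks 0 ((-2:ℝ) • Eij m i j)
      (-(Eij m i j * Matrix.diagonal lam + Matrix.diagonal lam * Eij m i j)) 0 := by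
    intro i j
    show B1 i j * A - A * B1 i j = _
    rw [hB1', hA, comp2]
  have hB3' : ∀ i j, B3 i j = fromBlocks
      ((3:ℝ) • (Eij m i j * Matrix.diagonal lam) + Matrix.diagonal lam * Eij m i j) 0 0
      (-((3:ℝ) • (Matrix.diagonal lam * Eij m i j) + Eij m i j * Matrix.diagonal lam)) := by
    intro i j
    show B2 i j * A - A * B2 i j = _
    rw [hB2', hA, comp3]
  have hdE : ∀ i j : Fin m, dL m (-(Eij m i j)) = B1 i j := by
    intro i j
    rw [hB1']
    simp [Matrix.transpose_neg, Eij_transpose]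
  have hdB3 : ∀ i j : Fin m, dL m ((3:ℝ) • (Eij m i j * Matrix.diagonal lam)
      + Matrix.diagonal lam * Eij m i j) = B3 i j := by
    intro i j
    rw [hB3']
    simp [Matrix.transpose_add, Matrix.transpose_smul, Matrix.transpose_mul,
      Matrix.diagonal_transpose, Eij_transpose]
  have hbc2 : ∀ i j : Fin m, (-2:ℝ) • bL m (Eij m i j)
      + cL m (-(Eij m i j * Matrix.diagonal lam + Matrix.diagonal lam * Eij m i j)) = B2 i j := by
    intro i j
    rw [hB2']
    simp only [bL_apply, cL_apply, Matrix.fromBlocks_smul, Matrix.fromBlocks_add,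
      smul_zero, add_zero, zero_add, neg_zero]
  have hsymEKKE : ∀ i j : Fin m,
      (-(Eij m i j * Matrix.diagonal lam + Matrix.diagonal lam * Eij m i j))ᵀ =
        -(Eij m i j * Matrix.diagonal lam + Matrix.diagonal lam * Eij m i j) := by
    intro i j
    simp [Matrix.transpose_add, Matrix.transpose_mul, Matrix.diagonal_transpose,
      Eij_transpose, add_comm]
  set SP := Submodule.span ℝ
      {X | ∃ i j : Fin m, i ≤ j ∧
        (X = ℰ i j ∨ X = B1 i j ∨ X = B2 i j ∨ X = B3 i j)} with hSP
  have hgen : ∀ i j : Fin m, ℰ i j ∈ SP ∧ B1 i j ∈ SP ∧ B2 i j ∈ SP ∧ B3 i j ∈ SP := by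
    intro i j
    rcases le_total i j with h | h
    · exact ⟨Submodule.subset_span ⟨i, j, h, Or.inl rfl⟩,
        Submodule.subset_span ⟨i, j, h, Or.inr (Or.inl rfl)⟩,
        Submodule.subset_span ⟨i, j, h, Or.inr (Or.inr (Or.inl rfl))⟩,
        Submodule.subset_span ⟨i, j, h, Or.inr (Or.inr (Or.inr rfl))⟩⟩
    · have e : Eij m i j = Eij m j i := Eij_symm i j
      have e0 : ℰ i j = ℰ j i := by rw [hE', hE', e]
      have e1 : B1 i j = B1 j i := by rw [hB1', hB1', e]
      have e2 : B2 i j = B2 j i := by rw [hB2', hB2', e]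
      have e3 : B3 i j = B3 j i := by rw [hB3', hB3', e]
      rw [e0, e1, e2, e3]
      exact ⟨Submodule.subset_span ⟨j, i, h, Or.inl rfl⟩,
        Submodule.subset_span ⟨j, i, h, Or.inr (Or.inl rfl)⟩,
        Submodule.subset_span ⟨j, i, h, Or.inr (Or.inr (Or.inl rfl))⟩,
        Submodule.subset_span ⟨j, i, h, Or.inr (Or.inr (Or.inr rfl))⟩⟩
  have hcE : ∀ i j : Fin m, cL m (Eij m i j) ∈ SP := by
    intro i j
    have h0 : cL m (Eij m i j) = ℰ i j := (hE' i j).symm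
    rw [h0]
    exact (hgen i j).1
  have hcmem : ∀ c : Mm m, cᵀ = c → cL m c ∈ SP := fun c hc =>
    symm_map_mem (cL m) SP hcE c hc
  have hbE : ∀ i j : Fin m, bL m (Eij m i j) ∈ SP := by
    intro i j
    have h2 : bL m (Eij m i j) = (-2:ℝ)⁻¹ • (B2 i j -
        cL m (-(Eij m i j * Matrix.diagonal lam + Matrix.diagonal lam * Eij m i j))) := by
      rw [← hbc2 i j, add_sub_cancel_right, inv_smul_smul₀ (by norm_num)]
    rw [h2]
    exact Submodule.smul_mem _ _ (sub_mem (hgen i j).2.2.1 (hcmem _ (hsymEKKE i j)))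
  have hbmem : ∀ b : Mm m, bᵀ = b → bL m b ∈ SP := fun b hb =>
    symm_map_mem (bL m) SP hbE b hb
  have hdEmem : ∀ i j : Fin m, dL m (Eij m i j) ∈ SP := by
    intro i j
    have : dL m (Eij m i j) = -(B1 i j) := by
      rw [← hdE i j, ← LinearMap.map_neg, neg_neg]
    rw [this]
    exact neg_mem (hgen i j).2.1
  have hdF : ∀ i j : Fin m, dL m (Matrix.single i j (1:ℝ)) ∈ SP := by
    intro i j
    rcases eq_or_ne i j with rfl | hne
    · have hF : Matrix.single i i (1:ℝ) = (2:ℝ)⁻¹ • Eij m i i := by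
        rw [Eij_diag, inv_smul_smul₀ (by norm_num)]
      rw [hF, LinearMap.map_smul]
      exact Submodule.smul_mem _ _ (hdEmem i i)
    · have hne' : (2 * (lam i - lam j)) ≠ 0 :=
        mul_ne_zero two_ne_zero (sub_ne_zero.mpr (hlam i j hne))
      have hF : Matrix.single i j (1:ℝ) = (2 * (lam i - lam j))⁻¹ •
          ((3 * lam i + lam j) • Eij m i j -
            ((3:ℝ) • (Eij m i j * Matrix.diagonal lam) + Matrix.diagonal lam * Eij m i j)) := by
        rw [lemId lam i j, inv_smul_smul₀ hne']
      rw [hF, LinearMap.map_smul]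
      refine Submodule.smul_mem _ _ ?_
      rw [LinearMap.map_sub, LinearMap.map_smul]
      exact sub_mem (Submodule.smul_mem _ _ (hdEmem i j)) (hdB3 i j ▸ (hgen i j).2.2.2)
  have hdmem : ∀ a : Mm m, dL m a ∈ SP := by
    intro a
    rw [matrix_eq_sum_single a, map_sum]
    refine Submodule.sum_mem _ fun i _ => ?_
    rw [map_sum]
    refine Submodule.sum_mem _ fun j _ => ?_
    rw [show Matrix.single i j (a i j) = a i j • Matrix.single i j (1:ℝ) by
        rw [Matrix.smul_single, smul_eq_mul, mul_one], LinearMap.map_smul]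
    exact Submodule.smul_mem _ _ (hdF i j)
  have key : SP = LinearMap.ker (symMap m) := by
    refine le_antisymm ?_ ?_
    · rw [hSP]
      refine Submodule.span_le.2 ?_
      rintro X ⟨i, j, hij, (rfl | rfl | rfl | rfl)⟩
      · exact cL_mem_ker (Eij m i j) (Eij_transpose i j)
      · rw [← hdE i j]
        exact dL_mem_ker _
      · rw [← hbc2 i j]
        exact add_mem (Submodule.smul_mem _ _ (bL_mem_ker _ (Eij_transpose i j)))
          (cL_mem_ker _ (hsymEKKE i j))
      · rw [← hdB3 i j]
        exact dL_mem_ker _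
    · intro Y hY
      obtain ⟨hdec, hb2, hc2⟩ := mem_ker_decomp Y hY
      rw [hdec]
      exact add_mem (add_mem (hdmem _) (hbmem _ hb2)) (hcmem _ hc2)
  refine ⟨SP, ?_, rfl, ?_⟩
  · rw [key]
    ext Y
    simpa using mem_ker_symMap_iff Y
  · rw [key]
    exact finrank_ker
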